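/- Let U be a complex Hilbert space, δ₀ > 0, r ∈ U with ‖r‖ < δ₀, and φ(u) = r + (δ₀/max{δ₀, ‖u − r‖})·(u − r). Then there exist constants α, β, γ > 0 such that Re⟨φ(u), u⟩ ≥ α‖u‖² whenever ‖u‖ < γ, and Re⟨φ(u), u⟩ ≥ β whenever ‖u‖ ≥ γ. -/

import Mathlib

open scoped InnerProductSpace

/-- For the shifted saturation function `φ` centered at `r` with `‖r‖ < δ₀`,
there exist `α, β, γ > 0` with `Re⟨φ(u), u⟩ ≥ α‖u‖²` for `‖u‖ < γ`
and `Re⟨φ(u), u⟩ ≥ β` for `‖u‖ ≥ γ`. -/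
theorem shifted_saturation_sector_bounds
    {U : Type*} [NormedAddCommGroup U] [InnerProductSpace ℂ U]
    (δ₀ : ℝ) (hδ₀ : 0 < δ₀) (r : U) (hr : ‖r‖ < δ₀)
    (φ : U → U)
    (hφ : ∀ u : U, φ u = r + (δ₀ / max δ₀ ‖u - r‖) • (u - r)) :
    ∃ α β γ : ℝ, 0 < α ∧ 0 < β ∧ 0 < γ ∧
      (∀ u : U, ‖u‖ < γ → α * ‖u‖ ^ 2 ≤ (⟪φ u, u⟫_ℂ).re) ∧
      (∀ u : U, γ ≤ ‖u‖ → β ≤ (⟪φ u, u⟫_ℂ).re) := by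
  set d := ‖r‖ with hd
  have hd0 : 0 ≤ d := norm_nonneg r
  have hγ : 0 < δ₀ - d := by linarith
  refine ⟨1, (δ₀ - d) ^ 2, δ₀ - d, one_pos, by positivity, hγ, ?_, ?_⟩
  all_goals intro u hu
  all_goals
    have hkey : (⟪φ u, u⟫_ℂ).re
        = (δ₀ / max δ₀ ‖u - r‖) * ‖u‖ ^ 2
          + (1 - δ₀ / max δ₀ ‖u - r‖) * (⟪r, u⟫_ℂ).re := by
      have h : (⟪u, u⟫_ℂ).re = ‖u‖ ^ 2 := by
        rw [← RCLike.re_to_complex]; exact inner_self_eq_norm_sq u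
      rw [hφ u, inner_add_left, ← Complex.coe_smul, inner_smul_left, inner_sub_left]
      simp [Complex.conj_ofReal, Complex.mul_re, h]
      rw [← Complex.ofReal_pow, Complex.ofReal_re]
      ring
  · -- small case: c = 1
    have hsub : ‖u - r‖ ≤ δ₀ := by
      calc ‖u - r‖ ≤ ‖u‖ + ‖r‖ := norm_sub_le u r
        _ ≤ δ₀ := by rw [← hd]; linarith
    rw [hkey, max_eq_left hsub, div_self hδ₀.ne']
    simp
  · -- big case
    have hR : -(d * ‖u‖) ≤ (⟪r, u⟫_ℂ).re := by
      have h1 : |(⟪r, u⟫_ℂ).re| ≤ ‖⟪r, u⟫_ℂ‖ := Complex.abs_re_le_norm _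
      have h2 : ‖⟪r, u⟫_ℂ‖ ≤ ‖r‖ * ‖u‖ := norm_inner_le_norm r u
      have := neg_abs_le (⟪r, u⟫_ℂ).re
      rw [← hd] at h2
      linarith
    rcases le_or_gt ‖u - r‖ δ₀ with hc | hc
    · rw [hkey, max_eq_left hc, div_self hδ₀.ne']
      have h2 : (δ₀ - d) ^ 2 ≤ ‖u‖ ^ 2 := by
        have := sq_le_sq' (by linarith [norm_nonneg u] : -(‖u‖) ≤ δ₀ - d) hu
        simpa using this
      simpa using h2
    · set s := ‖u - r‖ with hs
      have hsδ : δ₀ < s := hc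
      have hmax : max δ₀ s = s := max_eq_right hsδ.le
      have hs0 : 0 < s := lt_trans hδ₀ hsδ
      have hstd : s ≤ ‖u‖ + d := by rw [hd, hs]; exact norm_sub_le u r
      have hc1 : δ₀ / s ≤ 1 := by
        rw [div_le_one hs0]; exact hsδ.le
      have hc0 : 0 < δ₀ / s := div_pos hδ₀ hs0
      rw [hkey, hmax]
      have hcs : (δ₀ / s) * s = δ₀ := div_mul_cancel₀ _ hs0.ne'
      have hstep : (δ₀ - d) ^ 2 ≤ (δ₀ / s) * ‖u‖ ^ 2 - (1 - δ₀ / s) * (d * ‖u‖) := by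
        set c := δ₀ / s with hcdef
        have ht : δ₀ - d ≤ ‖u‖ := hu
        nlinarith [mul_nonneg hd0 (norm_nonneg u),
          mul_nonneg (mul_nonneg hd0 (norm_nonneg u)) (sub_nonneg.2 hstd),
          mul_nonneg hγ.le (sub_nonneg.2 ht), hs0, hc0, hc1, hcs,
          mul_pos hs0 hγ]
      have hmono : (1 - δ₀ / s) * (-(d * ‖u‖)) ≤ (1 - δ₀ / s) * (⟪r, u⟫_ℂ).re :=
        mul_le_mul_of_nonneg_left hR (by linarith)
      nlinarith [hmono]
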